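/- Let E be a field complete with respect to a discrete valuation v (e.g. a finite extension of ℚ_p), V a finite-dimensional E-vector space, and f ∈ End_E(V). Then there is a unique f-stable decomposition V = V₀ ⊕ V₊ such that every eigenvalue of f on V₀ (in a fixed algebraic closure of E, with the unique extension of v) has valuation 0, and no eigenvalue of f on V₊ has valuation 0. Both summands are given by V₀ = ker(P₀(f)) and V₊ = ker(P₊(f)) where charpoly(f) = P₀ · P₊ is the factorization in E[X] grouping the roots of valuation 0 into P₀; in particular f restricts to an automorphism of V₀ with 'unit' eigenvalues. -/

import Mathlib

open Polynomial

open scoped NNReal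

section AuxLinear

variable {E V : Type*} [Field E] [AddCommGroup V] [Module E V]

private lemma aux_aeval_restrict_apply (f : Module.End E V) {p : Submodule E V}
    (h : ∀ x ∈ p, f x ∈ p) (q : E[X]) (x : p) :
    ((Polynomial.aeval (f.restrict h) q) x : V) = Polynomial.aeval f q x := by
  induction q using Polynomial.induction_on' with
  | add p q hp hq => simp [hp, hq]
  | monomial n a =>
      simp only [aeval_monomial]
      simp only [Module.algebraMap_end_eq_smul_id, Module.End.mul_apply,
        LinearMap.smul_apply, LinearMap.id_apply]
      rw [Module.End.pow_restrict]
      simp [LinearMap.restrict_apply]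

private lemma aux_exists_eigenvector_of_isRoot_charpoly {F W : Type*} [Field F] [AddCommGroup W]
    [Module F W] [FiniteDimensional F W] (g : Module.End F W) {μ : F}
    (h : (LinearMap.charpoly g).IsRoot μ) : ∃ x : W, x ≠ 0 ∧ g x = μ • x := by
  classical
  have hdet : LinearMap.det (μ • (1 : Module.End F W) - g) = 0 := by
    let b := Module.Free.chooseBasis F W
    rw [← LinearMap.det_toMatrix b]
    have h1 : LinearMap.toMatrix b b (μ • (1 : Module.End F W) - g)
        = μ • (1 : Matrix _ _ F) - LinearMap.toMatrix b b g := by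
      simp [map_sub, map_smul, LinearMap.toMatrix_one]
    rw [h1]
    have h2 : (μ • (1 : Matrix _ _ F) - LinearMap.toMatrix b b g).det
        = (LinearMap.toMatrix b b g).charpoly.eval μ := by
      rw [Matrix.charpoly, Polynomial.eval, ← Polynomial.coe_eval₂RingHom,
        RingHom.map_det]
      congr 1
      ext i j
      by_cases hij : i = j <;>
        simp [hij, Matrix.charmatrix_apply_eq, Matrix.charmatrix_apply_ne,
          Matrix.sub_apply, Matrix.smul_apply, Matrix.one_apply,
          RingHom.mapMatrix_apply, Matrix.map_apply, Polynomial.coe_eval₂RingHom]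
    rw [h2, LinearMap.charpoly_toMatrix]
    exact h
  obtain ⟨x, hx, hx0⟩ := Submodule.exists_mem_ne_zero_of_ne_bot
    (LinearMap.bot_lt_ker_of_det_eq_zero hdet).ne'
  refine ⟨x, hx0, ?_⟩
  have := LinearMap.mem_ker.mp hx
  simp only [LinearMap.sub_apply, LinearMap.smul_apply, Module.End.one_apply] at this
  rw [sub_eq_zero] at this
  exact this.symm

variable {F : Type*} [Field F] [Algebra E F]

private lemma aux_isCoprime_of_no_common_root {A B : E[X]} (hA : A ≠ 0)
    (hAs : (A.map (algebraMap E F)).Splits)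
    (hcomm : ∀ μ : F, (A.map (algebraMap E F)).IsRoot μ →
      (B.map (algebraMap E F)).IsRoot μ → False) : IsCoprime A B := by
  classical
  by_contra hco
  rw [← EuclideanDomain.gcd_isUnit_iff] at hco
  set d := EuclideanDomain.gcd A B with hd
  have hdA : d ∣ A := EuclideanDomain.gcd_dvd_left A B
  have hdB : d ∣ B := EuclideanDomain.gcd_dvd_right A B
  have hd0 : d ≠ 0 := fun h => hA (by simpa [h] using hdA)
  have hds : (d.map (algebraMap E F)).Splits :=
    Splits.of_dvd hAs (Polynomial.map_ne_zero hA) (Polynomial.map_dvd _ hdA)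
  have hdeg : (d.map (algebraMap E F)).degree ≠ 0 := by
    rw [degree_map]
    intro h
    exact hco (isUnit_iff_degree_eq_zero.mpr h)
  obtain ⟨μ, hμ⟩ := Splits.exists_eval_eq_zero hds hdeg
  have hroot : (d.map (algebraMap E F)).IsRoot μ := by
    exact hμ
  exact hcomm μ (hroot.dvd (Polynomial.map_dvd _ hdA)) (hroot.dvd (Polynomial.map_dvd _ hdB))

variable [FiniteDimensional E V]

private lemma aux_ker_aeval_stable (f : Module.End E V) (P : E[X]) :
    ∀ x ∈ LinearMap.ker (Polynomial.aeval f P), f x ∈ LinearMap.ker (Polynomial.aeval f P) := by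
  intro x hx
  rw [LinearMap.mem_ker] at hx ⊢
  have hc : Polynomial.aeval f P * f = f * Polynomial.aeval f P := by
    have h1 := map_mul (Polynomial.aeval f) P X
    have h2 := map_mul (Polynomial.aeval f) X P
    rw [Polynomial.aeval_X] at h1 h2
    rw [← h1, ← h2, mul_comm]
  calc (Polynomial.aeval f P) (f x) = (Polynomial.aeval f P * f) x := rfl
    _ = f ((Polynomial.aeval f P) x) := by rw [hc]; rfl
    _ = 0 := by rw [hx, map_zero]

private lemma aux_ker_aeval_isCompl (f : Module.End E V) {P₀ Pp : E[X]}
    (hfac : LinearMap.charpoly f = P₀ * Pp) (hco : IsCoprime P₀ Pp) :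
    IsCompl (LinearMap.ker (Polynomial.aeval f P₀)) (LinearMap.ker (Polynomial.aeval f Pp)) := by
  obtain ⟨a, b, hab⟩ := hco
  have key : ∀ x : V, (Polynomial.aeval f (a * P₀)) x + (Polynomial.aeval f (b * Pp)) x = x := by
    intro x
    have h1 : Polynomial.aeval f (a * P₀ + b * Pp) = 1 := by rw [hab]; exact map_one _
    calc _ = (Polynomial.aeval f (a * P₀ + b * Pp)) x := by rw [map_add]; rfl
      _ = x := by rw [h1]; rfl
  have hCH : Polynomial.aeval f (P₀ * Pp) = 0 := by
    rw [← hfac]; exact LinearMap.aeval_self_charpoly f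
  constructor
  · rw [disjoint_iff_inf_le]
    intro x hx
    obtain ⟨hx0, hxp⟩ := Submodule.mem_inf.mp hx
    rw [LinearMap.mem_ker] at hx0 hxp
    rw [Submodule.mem_bot, ← key x]
    rw [map_mul, map_mul]
    simp only [Module.End.mul_apply, hx0, hxp, map_zero, add_zero]
  · rw [codisjoint_iff_le_sup]
    intro x _
    have hx : (Polynomial.aeval f (b * Pp)) x + (Polynomial.aeval f (a * P₀)) x = x := by
      rw [add_comm]; exact key x
    rw [← hx]
    apply Submodule.add_mem_sup
    · rw [LinearMap.mem_ker]
      have h1 : P₀ * (b * Pp) = b * (P₀ * Pp) := by ring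
      calc (Polynomial.aeval f P₀) ((Polynomial.aeval f (b * Pp)) x)
          = (Polynomial.aeval f (P₀ * (b * Pp))) x := by
            simp [map_mul, Module.End.mul_apply]
        _ = (Polynomial.aeval f b) ((Polynomial.aeval f (P₀ * Pp)) x) := by
            simp [h1, map_mul, Module.End.mul_apply]
        _ = 0 := by rw [hCH]; simp
    · rw [LinearMap.mem_ker]
      have h1 : Pp * (a * P₀) = a * (P₀ * Pp) := by ring
      calc (Polynomial.aeval f Pp) ((Polynomial.aeval f (a * P₀)) x)
          = (Polynomial.aeval f (Pp * (a * P₀))) x := by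
            simp [map_mul, Module.End.mul_apply]
        _ = (Polynomial.aeval f a) ((Polynomial.aeval f (P₀ * Pp)) x) := by
            simp [h1, map_mul, Module.End.mul_apply]
        _ = 0 := by rw [hCH]; simp

private lemma aux_isRoot_of_isRoot_charpoly_restrict (f : Module.End E V) (P : E[X])
    (h : ∀ x ∈ LinearMap.ker (Polynomial.aeval f P),
      f x ∈ LinearMap.ker (Polynomial.aeval f P)) {μ : F}
    (hμ : ((LinearMap.charpoly (f.restrict h)).map (algebraMap E F)).IsRoot μ) :
    (P.map (algebraMap E F)).IsRoot μ := by
  classical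
  set W := LinearMap.ker (Polynomial.aeval f P)
  set g := f.restrict h with hg
  have hgP : Polynomial.aeval g P = 0 := by
    ext x
    have h1 := aux_aeval_restrict_apply f h P x
    rw [LinearMap.zero_apply]
    show ((Polynomial.aeval (f.restrict h) P) x : V) = ((0 : ↥W) : V)
    simp only [ZeroMemClass.coe_zero]
    rw [h1]
    exact LinearMap.mem_ker.mp x.2
  have hch : LinearMap.charpoly (g.baseChange F) = (LinearMap.charpoly g).map (algebraMap E F) :=
    LinearMap.charpoly_baseChange g F
  have hμ' : (LinearMap.charpoly (g.baseChange F)).IsRoot μ := by rw [hch]; exact hμ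
  obtain ⟨x, hx0, hgx⟩ := aux_exists_eigenvector_of_isRoot_charpoly (g.baseChange F) hμ'
  have hbc : Polynomial.aeval (g.baseChange F) (P.map (algebraMap E F)) = 0 := by
    have h1 : Polynomial.aeval (Module.End.baseChangeHom E F ↥W g) P
        = Module.End.baseChangeHom E F ↥W (Polynomial.aeval g P) :=
      Polynomial.aeval_algHom_apply _ _ _
    rw [hgP, map_zero] at h1
    rw [Polynomial.aeval_map_algebraMap]
    exact h1
  have h2 := Module.End.aeval_apply_of_hasEigenvector (p := P.map (algebraMap E F))
    ⟨by rw [Module.End.mem_eigenspace_iff]; exact hgx, hx0⟩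
  rw [hbc] at h2
  simp only [LinearMap.zero_apply] at h2
  have h0 := h2.symm
  rw [smul_eq_zero] at h0
  exact h0.resolve_right hx0

end AuxLinear

section AuxValuation

variable {E : Type*} [Field E] [Valued E (WithZero (Multiplicative ℤ))]
variable {F : Type*} [Field F] [Algebra E F] (w : Valuation F (WithZero (Multiplicative ℤ)))

private lemma aux_val_eq_one_of_root_trivial
    (hw : ∀ x : E, w (algebraMap E F x) = Valued.v x)
    (htriv : ∀ x : E, x ≠ 0 → (Valued.v x : WithZero (Multiplicative ℤ)) = 1)
    {q : E[X]} (hq : Irreducible q) {γ : F}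
    (hγ : (q.map (algebraMap E F)).IsRoot γ) (h0 : q.coeff 0 ≠ 0) : w γ = 1 := by
  set e := algebraMap E F
  set n := q.natDegree with hn
  have hn1 : 1 ≤ n := hq.natDegree_pos
  have hγ0 : γ ≠ 0 := by
    rintro rfl
    rw [Polynomial.IsRoot, ← Polynomial.coeff_zero_eq_eval_zero, Polynomial.coeff_map] at hγ
    exact h0 (by simpa using hγ)
  have hwγ0 : w γ ≠ 0 := by simpa using hγ0
  have hcn : q.coeff n ≠ 0 := by
    rw [hn]
    exact Polynomial.leadingCoeff_ne_zero.mpr hq.ne_zero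
  have hnd : (q.map e).natDegree = n :=
    Polynomial.natDegree_map_eq_of_injective (algebraMap E F).injective q
  have hsum : ∑ i ∈ Finset.range (n + 1), e (q.coeff i) * γ ^ i = 0 := by
    have h1 := Polynomial.eval_eq_sum_range (p := q.map e) γ
    rw [hnd, Polynomial.IsRoot.def.mp hγ] at h1
    calc ∑ i ∈ Finset.range (n + 1), e (q.coeff i) * γ ^ i
        = ∑ i ∈ Finset.range (n + 1), (q.map e).coeff i * γ ^ i :=
          Finset.sum_congr rfl fun i _ => by rw [Polynomial.coeff_map]
      _ = 0 := h1.symm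
  have hterm : ∀ i, w (e (q.coeff i) * γ ^ i) ≤ w γ ^ i := by
    intro i
    rw [map_mul, hw, map_pow]
    by_cases h : q.coeff i = 0
    · simp [h]
    · rw [htriv _ h, one_mul]
  have hle : w γ ≤ 1 := by
    by_contra hlt
    push_neg at hlt
    have htop : e (q.coeff n) * γ ^ n = -∑ i ∈ Finset.range n, e (q.coeff i) * γ ^ i := by
      rw [eq_neg_iff_add_eq_zero, add_comm, ← Finset.sum_range_succ]
      exact hsum
    have hlhs : w (e (q.coeff n) * γ ^ n) = w γ ^ n := by
      rw [map_mul, hw, map_pow, htriv _ hcn, one_mul]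
    have hrhs : w (-∑ i ∈ Finset.range n, e (q.coeff i) * γ ^ i) ≤ w γ ^ (n - 1) := by
      rw [Valuation.map_neg]
      apply Valuation.map_sum_le
      intro i hi
      have hi' := Finset.mem_range.mp hi
      refine le_trans (hterm i) ?_
      exact pow_le_pow_right₀ hlt.le (by omega)
    rw [htop] at hlhs
    have h3 : w γ ^ n ≤ w γ ^ (n - 1) := hlhs ▸ hrhs
    have h2 : w γ ^ (n - 1) < w γ ^ n := by
      apply pow_lt_pow_right₀ hlt (by omega)
    exact absurd h3 (not_le.mpr h2)
  have hge : 1 ≤ w γ := by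
    by_contra hlt
    push_neg at hlt
    have hbot : e (q.coeff 0) = -∑ i ∈ Finset.range n, e (q.coeff (i + 1)) * γ ^ (i + 1) := by
      have h2 := Finset.sum_range_succ' (fun i => e (q.coeff i) * γ ^ i) n
      have h3 : ∑ i ∈ Finset.range n, e (q.coeff (i + 1)) * γ ^ (i + 1) + e (q.coeff 0) = 0 := by
        have h4 := h2.symm.trans hsum
        simpa using h4
      rw [eq_neg_iff_add_eq_zero, add_comm]
      exact h3
    have h1 : (1 : WithZero (Multiplicative ℤ)) = w (e (q.coeff 0)) := by rw [hw, htriv _ h0]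
    have h2 : w (e (q.coeff 0)) ≤ w γ := by
      rw [hbot, Valuation.map_neg]
      apply Valuation.map_sum_le
      intro i hi
      refine le_trans (hterm (i + 1)) ?_
      calc w γ ^ (i + 1) = w γ ^ i * w γ := pow_succ _ _
        _ ≤ 1 * w γ := mul_le_mul_left (pow_le_one₀ zero_le' hlt.le) _
        _ = w γ := one_mul _
    rw [← h1] at h2
    exact absurd (lt_of_le_of_lt h2 hlt) (lt_irrefl _)
  exact le_antisymm hle hge

set_option synthInstance.maxHeartbeats 1000000 in
set_option maxHeartbeats 1000000 in
private lemma aux_val_root_le_nontrivial [CompleteSpace E]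
    (hw : ∀ x : E, w (algebraMap E F x) = Valued.v x)
    {π : E} (hπ0 : (Valued.v π : WithZero (Multiplicative ℤ)) ≠ 0) (hπ1 : Valued.v π ≠ 1)
    {q : E[X]} (hq : Irreducible q) {α β : F}
    (hα : (q.map (algebraMap E F)).IsRoot α) (hβ : (q.map (algebraMap E F)).IsRoot β) :
    w β ≤ w α := by
  haveI : Fact (Irreducible q) := ⟨hq⟩
  have hαa : Polynomial.aeval α q = 0 := by
    rwa [Polynomial.aeval_def, ← Polynomial.eval_map]
  have hβa : Polynomial.aeval β q = 0 := by
    rwa [Polynomial.aeval_def, ← Polynomial.eval_map]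
  set K := AdjoinRoot q
  let g₁ : K →ₐ[E] F := AdjoinRoot.liftAlgHom q (Algebra.ofId E F) α hαa
  let g₂ : K →ₐ[E] F := AdjoinRoot.liftAlgHom q (Algebra.ofId E F) β hβa
  haveI : FiniteDimensional E K :=
    Module.Finite.of_basis (AdjoinRoot.powerBasis hq.ne_zero).basis
  let w₁ : Valuation K (WithZero (Multiplicative ℤ)) := w.comap (g₁ : K →+* F)
  have h12 : (1 : ℝ≥0) < 2 := one_lt_two
  let φ : (WithZero (Multiplicative ℤ)) →*₀ ℝ≥0 := WithZeroMulInt.toNNReal (ne_zero_of_lt h12)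
  have hφmono : StrictMono φ := WithZeroMulInt.toNNReal_strictMono h12
  letI hrE : Valuation.RankOne (Valued.v : Valuation E (WithZero (Multiplicative ℤ))) :=
    { hom' := φ.comp MonoidWithZeroHom.ValueGroup₀.embedding,
      strictMono' := hφmono.comp MonoidWithZeroHom.ValueGroup₀.embedding_strictMono,
      exists_val_nontrivial := ⟨π, hπ0, hπ1⟩ }
  letI : NontriviallyNormedField E :=
    Valued.toNontriviallyNormedField E (WithZero (Multiplicative ℤ))
  haveI hcmpl : CompleteSpace E := ‹CompleteSpace E›
  letI : Valued K (WithZero (Multiplicative ℤ)) := Valued.mk' w₁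
  letI hrK : Valuation.RankOne (Valued.v : Valuation K (WithZero (Multiplicative ℤ))) :=
    { hom' := φ.comp MonoidWithZeroHom.ValueGroup₀.embedding,
      strictMono' := hφmono.comp MonoidWithZeroHom.ValueGroup₀.embedding_strictMono,
      exists_val_nontrivial := by
        refine ⟨algebraMap E K π, ?_, ?_⟩ <;>
          · show w₁ (algebraMap E K π) ≠ _
            have h1 : w₁ (algebraMap E K π) = Valued.v π := by
              show w (g₁ (algebraMap E K π)) = _
              rw [g₁.commutes, hw]
            rw [h1]
            assumption }
  letI : NormedField K := Valued.toNormedField K (WithZero (Multiplicative ℤ))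
  letI : Valued F (WithZero (Multiplicative ℤ)) := Valued.mk' w
  letI hrF : Valuation.RankOne (Valued.v : Valuation F (WithZero (Multiplicative ℤ))) :=
    { hom' := φ.comp MonoidWithZeroHom.ValueGroup₀.embedding,
      strictMono' := hφmono.comp MonoidWithZeroHom.ValueGroup₀.embedding_strictMono,
      exists_val_nontrivial := by
        refine ⟨algebraMap E F π, ?_, ?_⟩ <;>
          · show w (algebraMap E F π) ≠ _
            rw [hw]
            assumption }
  letI : NormedField F := Valued.toNormedField F (WithZero (Multiplicative ℤ))
  have hnK : ∀ z : K, ‖z‖ = ((φ (w (g₁ z)) : ℝ≥0) : ℝ) := fun z =>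
    congrArg (fun t => ((φ t : ℝ≥0) : ℝ)) (Valuation.embedding_restrict (Valued.v : Valuation K _) z)
  have hnF : ∀ y : F, ‖y‖ = ((φ (w y) : ℝ≥0) : ℝ) := fun y =>
    congrArg (fun t => ((φ t : ℝ≥0) : ℝ)) (Valuation.embedding_restrict (Valued.v : Valuation F _) y)
  have hnE : ∀ c : E, ‖c‖ = ((φ (Valued.v c) : ℝ≥0) : ℝ) := fun c =>
    congrArg (fun t => ((φ t : ℝ≥0) : ℝ)) (Valuation.embedding_restrict (Valued.v : Valuation E _) c)
  letI : NormedSpace E K :=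
    { (inferInstance : Module E K) with
      norm_smul_le := fun c z => by
        have h1 : g₁ (c • z) = algebraMap E F c * g₁ z := by
          rw [Algebra.smul_def, _root_.map_mul, g₁.commutes]
        refine le_of_eq ?_
        rw [hnK, hnK, hnE, h1, Valuation.map_mul, hw, _root_.map_mul, NNReal.coe_mul] }
  letI : NormedSpace E F :=
    { (inferInstance : Module E F) with
      norm_smul_le := fun c y => by
        have h1 : c • y = algebraMap E F c * y := Algebra.smul_def c y
        refine le_of_eq ?_
        rw [hnF, hnF, hnE, h1, Valuation.map_mul, hw, _root_.map_mul, NNReal.coe_mul] }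
  have hcont : Continuous (g₂.toLinearMap : K →ₗ[E] F) :=
    LinearMap.continuous_of_finiteDimensional _
  obtain ⟨C, hC0, hC⟩ := SemilinearMapClass.bound_of_continuous g₂.toLinearMap hcont
  have key : ∀ z : K, w (g₂ z) ≤ w (g₁ z) := by
    intro z
    by_cases hz : z = 0
    · simp [hz]
    · have hb0 : (0 : ℝ) < ((φ (w (g₁ z)) : ℝ≥0) : ℝ) := by
        have h1 : w (g₁ z) ≠ 0 := by
          simp only [ne_eq, Valuation.zero_iff]
          exact fun h => hz ((map_eq_zero_iff g₁ (RingHom.injective (g₁ : K →+* F))).mp h)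
        exact_mod_cast WithZeroMulInt.toNNReal_pos (ne_zero_of_lt h12) h1
      set a : ℝ := ((φ (w (g₂ z)) : ℝ≥0) : ℝ) with ha
      set b : ℝ := ((φ (w (g₁ z)) : ℝ≥0) : ℝ) with hb
      have hratio : ∀ m : ℕ, a ^ m ≤ C * b ^ m := by
        intro m
        have h1 := hC (z ^ m)
        have e1 : g₂.toLinearMap (z ^ m) = (g₂ z) ^ m := by simp [map_pow]
        rw [e1, norm_pow, norm_pow, hnF, hnK] at h1
        exact h1
      have hab : a ≤ b := by
        by_contra hgt
        push_neg at hgt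
        have h1 : 1 < a / b := (one_lt_div hb0).mpr hgt
        obtain ⟨m, hm⟩ := pow_unbounded_of_one_lt C h1
        rw [div_pow, lt_div_iff₀ (pow_pos hb0 m)] at hm
        exact absurd (hratio m) (not_le.mpr hm)
      have hφle : φ (w (g₂ z)) ≤ φ (w (g₁ z)) := by exact_mod_cast hab
      exact hφmono.le_iff_le.mp hφle
  have hroot := key (AdjoinRoot.root q)
  have e1 : g₁ (AdjoinRoot.root q) = α := AdjoinRoot.liftAlgHom_root q (Algebra.ofId E F) α hαa
  have e2 : g₂ (AdjoinRoot.root q) = β := AdjoinRoot.liftAlgHom_root q (Algebra.ofId E F) β hβa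
  rwa [e1, e2] at hroot

private lemma aux_val_eq_of_roots [CompleteSpace E]
    (hw : ∀ x : E, w (algebraMap E F x) = Valued.v x)
    {q : E[X]} (hq : Irreducible q) {α β : F}
    (hα : (q.map (algebraMap E F)).IsRoot α) (hβ : (q.map (algebraMap E F)).IsRoot β) :
    w α = w β := by
  by_cases hnt : ∃ π : E, (Valued.v π : WithZero (Multiplicative ℤ)) ≠ 0 ∧ Valued.v π ≠ 1
  · obtain ⟨π, h0, h1⟩ := hnt
    exact le_antisymm (aux_val_root_le_nontrivial w hw h0 h1 hq hβ hα)
      (aux_val_root_le_nontrivial w hw h0 h1 hq hα hβ)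
  · push_neg at hnt
    have htriv : ∀ x : E, x ≠ 0 → (Valued.v x : WithZero (Multiplicative ℤ)) = 1 := by
      intro x hx
      exact hnt x (by simpa [Valuation.zero_iff] using hx)
    by_cases h0 : q.coeff 0 = 0
    · have hX : (X : E[X]) ∣ q := X_dvd_iff.mpr h0
      obtain ⟨c, hc⟩ := hX
      have hcu : IsUnit c := (hq.isUnit_or_isUnit hc).resolve_left Polynomial.not_isUnit_X
      obtain ⟨r, hru, hrc⟩ := Polynomial.isUnit_iff.mp hcu
      have hzero : ∀ γ : F, (q.map (algebraMap E F)).IsRoot γ → γ = 0 := by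
        intro γ hγ
        rw [Polynomial.IsRoot, hc, ← hrc, Polynomial.map_mul, Polynomial.map_X,
          Polynomial.map_C, Polynomial.eval_mul, Polynomial.eval_X, Polynomial.eval_C] at hγ
        rcases mul_eq_zero.mp hγ with h | h
        · exact h
        · exact absurd h ((map_ne_zero (algebraMap E F)).mpr hru.ne_zero)
      rw [hzero α hα, hzero β hβ]
    · rw [aux_val_eq_one_of_root_trivial w hw htriv hq hα h0,
        aux_val_eq_one_of_root_trivial w hw htriv hq hβ h0]

end AuxValuation

/-- Slope-zero (ordinary) decomposition: let `E` be a field complete with respect to a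
discrete valuation (`Valued E ℤₘ₀` and complete), `V` a finite-dimensional `E`-vector space
and `f ∈ End_E(V)`. Let `F/E` be a field extension with a valuation `w` extending that of `E`
in which `charpoly f` splits (e.g. an algebraic closure with the unique extension of the
valuation). Then there is a unique `f`-stable decomposition `V = V₀ ⊕ V₊` such that every
eigenvalue of `f` on `V₀` has valuation `0` (value `1`) and no eigenvalue of `f` on `V₊`
has valuation `0`; the summands are `V₀ = ker P₀(f)`, `V₊ = ker P₊(f)` for the factorization
`charpoly f = P₀ · P₊` grouping the valuation-zero roots into `P₀`, and `f` restricts to an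
automorphism of `V₀`. -/
theorem slope_zero_decomposition {E : Type*} [Field E]
    [Valued E (WithZero (Multiplicative ℤ))] [CompleteSpace E]
    {V : Type*} [AddCommGroup V] [Module E V] [FiniteDimensional E V]
    (f : Module.End E V)
    {F : Type*} [Field F] [Algebra E F] (w : Valuation F (WithZero (Multiplicative ℤ)))
    (hw : ∀ x : E, w (algebraMap E F x) = Valued.v x)
    (hsplit : Polynomial.Splits ((LinearMap.charpoly f).map (algebraMap E F))) :
    ∃ (V₀ Vp : Submodule E V) (h₀ : ∀ x ∈ V₀, f x ∈ V₀) (hp : ∀ x ∈ Vp, f x ∈ Vp),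
      IsCompl V₀ Vp ∧
      (∀ μ : F, ((LinearMap.charpoly (f.restrict h₀)).map (algebraMap E F)).IsRoot μ →
        w μ = 1) ∧
      (∀ μ : F, ((LinearMap.charpoly (f.restrict hp)).map (algebraMap E F)).IsRoot μ →
        w μ ≠ 1) ∧
      Function.Bijective (f.restrict h₀) ∧
      (∃ P₀ Pp : E[X], LinearMap.charpoly f = P₀ * Pp ∧
        (∀ μ : F, (P₀.map (algebraMap E F)).IsRoot μ → w μ = 1) ∧
        (∀ μ : F, (Pp.map (algebraMap E F)).IsRoot μ → w μ ≠ 1) ∧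
        V₀ = LinearMap.ker (Polynomial.aeval f P₀) ∧
        Vp = LinearMap.ker (Polynomial.aeval f Pp)) ∧
      (∀ (V₀' Vp' : Submodule E V) (h₀' : ∀ x ∈ V₀', f x ∈ V₀')
          (hp' : ∀ x ∈ Vp', f x ∈ Vp'),
        IsCompl V₀' Vp' →
        (∀ μ : F, ((LinearMap.charpoly (f.restrict h₀')).map (algebraMap E F)).IsRoot μ →
          w μ = 1) →
        (∀ μ : F, ((LinearMap.charpoly (f.restrict hp')).map (algebraMap E F)).IsRoot μ →
          w μ ≠ 1) →
        V₀' = V₀ ∧ Vp' = Vp) := by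
  classical
  set e := algebraMap E F with he
  set P := LinearMap.charpoly f with hPdef
  have hPmonic : P.Monic := f.charpoly_monic
  have hP0 : P ≠ 0 := hPmonic.ne_zero
  -- factor the characteristic polynomial
  set Fac := UniqueFactorizationMonoid.normalizedFactors P with hFacdef
  obtain ⟨u, hu⟩ := (UniqueFactorizationMonoid.prod_normalizedFactors hP0)
  set pred : E[X] → Prop := fun q => ∀ μ : F, ((q.map e).IsRoot μ) → w μ = 1 with hpreddef
  set M₀ := Fac.filter pred with hM₀def
  set M₁ := Fac.filter (fun q => ¬ pred q) with hM₁def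
  have hMsum : M₀ + M₁ = Fac := Multiset.filter_add_not _ _
  set P₀ := M₀.prod with hP₀def
  set Pp := M₁.prod * (u : E[X]) with hPpdef
  have hfac : P = P₀ * Pp := by
    rw [hP₀def, hPpdef, ← mul_assoc, ← Multiset.prod_add, hMsum, hu]
  have hP₀0 : P₀ ≠ 0 := fun h => hP0 (by rw [hfac, h, zero_mul])
  have hPp0 : Pp ≠ 0 := fun h => hP0 (by rw [hfac, h, mul_zero])
  have hP₀dvd : P₀ ∣ P := by
    have h1 : M₀.prod ∣ Fac.prod := Multiset.prod_dvd_prod_of_le (Multiset.filter_le _ _)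
    have h2 : Fac.prod ∣ P := ⟨u, hu.symm⟩
    exact dvd_trans h1 h2
  have hPpdvd : Pp ∣ P := Dvd.intro_left P₀ hfac.symm
  have hP₀splits : (P₀.map e).Splits := Splits.of_dvd hsplit (Polynomial.map_ne_zero hP0) (Polynomial.map_dvd e hP₀dvd)
  have hPpsplits : (Pp.map e).Splits := Splits.of_dvd hsplit (Polynomial.map_ne_zero hP0) (Polynomial.map_dvd e hPpdvd)
  -- roots of a multiset product
  have hprodroot : ∀ (M : Multiset E[X]) (μ : F), ((M.prod.map e).IsRoot μ) →
      ∃ q ∈ M, ((q.map e).IsRoot μ) := by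
    intro M μ hμ
    rw [Polynomial.IsRoot] at hμ
    have h1 : M.prod.map e = (M.map (fun q => q.map e)).prod := by
      simpa using map_multiset_prod (Polynomial.mapRingHom e) M
    rw [h1] at hμ
    have h2 : ((M.map (fun q => q.map e)).map (fun p => Polynomial.eval μ p)).prod = 0 := by
      rw [← hμ]
      exact (map_multiset_prod (Polynomial.evalRingHom μ) _).symm
    rw [Multiset.prod_eq_zero_iff] at h2
    obtain ⟨p, hp, hp0⟩ := Multiset.mem_map.mp h2
    obtain ⟨q, hq, rfl⟩ := Multiset.mem_map.mp hp
    exact ⟨q, hq, hp0⟩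
  have hroot₀ : ∀ μ : F, ((P₀.map e).IsRoot μ) → w μ = 1 := by
    intro μ hμ
    obtain ⟨q, hqM, hqroot⟩ := hprodroot M₀ μ hμ
    exact (Multiset.mem_filter.mp hqM).2 μ hqroot
  have hrootp : ∀ μ : F, ((Pp.map e).IsRoot μ) → w μ ≠ 1 := by
    intro μ hμ
    rw [Polynomial.IsRoot, hPpdef, Polynomial.map_mul, Polynomial.eval_mul] at hμ
    have huval : Polynomial.eval μ ((u : E[X]).map e) ≠ 0 := by
      obtain ⟨r, hru, hrc⟩ := Polynomial.isUnit_iff.mp u.isUnit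
      rw [← hrc, Polynomial.map_C, Polynomial.eval_C]
      exact (map_ne_zero (algebraMap E F)).mpr hru.ne_zero
    have hμ1 : (M₁.prod.map e).IsRoot μ := by
      rcases mul_eq_zero.mp hμ with h | h
      · exact h
      · exact absurd h huval
    obtain ⟨q, hqM, hqroot⟩ := hprodroot M₁ μ hμ1
    have hqFac : q ∈ Fac := (Multiset.mem_filter.mp hqM).1
    have hqirr : Irreducible q :=
      UniqueFactorizationMonoid.irreducible_of_normalized_factor q hqFac
    have hnpred : ¬ pred q := (Multiset.mem_filter.mp hqM).2
    have hnpred' : ∃ ν : F, ((q.map e).IsRoot ν) ∧ w ν ≠ 1 := by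
      by_contra hno
      push_neg at hno
      exact hnpred (fun ν h => hno ν h)
    obtain ⟨ν, hνroot, hν1⟩ := hnpred'
    have := aux_val_eq_of_roots w hw hqirr hqroot hνroot
    rw [this]
    exact hν1
  have hco : IsCoprime P₀ Pp :=
    aux_isCoprime_of_no_common_root hP₀0 hP₀splits
      (fun μ h1 h2 => hrootp μ h2 (hroot₀ μ h1))
  -- the decomposition
  set V₀ := LinearMap.ker (Polynomial.aeval f P₀) with hV₀def
  set Vp := LinearMap.ker (Polynomial.aeval f Pp) with hVpdef
  have h₀ : ∀ x ∈ V₀, f x ∈ V₀ := aux_ker_aeval_stable f P₀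
  have hp : ∀ x ∈ Vp, f x ∈ Vp := aux_ker_aeval_stable f Pp
  have hcompl : IsCompl V₀ Vp := aux_ker_aeval_isCompl f hfac hco
  have hres₀ : ∀ μ : F, ((LinearMap.charpoly (f.restrict h₀)).map e).IsRoot μ → w μ = 1 :=
    fun μ h => hroot₀ μ (aux_isRoot_of_isRoot_charpoly_restrict f P₀ h₀ h)
  have hresp : ∀ μ : F, ((LinearMap.charpoly (f.restrict hp)).map e).IsRoot μ → w μ ≠ 1 :=
    fun μ h => hrootp μ (aux_isRoot_of_isRoot_charpoly_restrict f Pp hp h)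
  have hbij : Function.Bijective (f.restrict h₀) := by
    have hinj : Function.Injective (f.restrict h₀) := by
      rw [← LinearMap.ker_eq_bot]
      by_contra hker
      obtain ⟨x, hx, hx0⟩ := Submodule.exists_mem_ne_zero_of_ne_bot hker
      have hev : Module.End.HasEigenvalue (f.restrict h₀) 0 :=
        Module.End.hasEigenvalue_of_hasEigenvector
          ⟨by rw [Module.End.mem_eigenspace_iff, zero_smul]; exact LinearMap.mem_ker.mp hx, hx0⟩
      have h1 : (minpoly E (f.restrict h₀)).IsRoot 0 :=
        Module.End.hasEigenvalue_iff_isRoot.mp hev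
      have h2 : (LinearMap.charpoly (f.restrict h₀)).IsRoot 0 :=
        h1.dvd (LinearMap.minpoly_dvd_charpoly _)
      have h3 : ((LinearMap.charpoly (f.restrict h₀)).map e).IsRoot 0 := by
        rw [Polynomial.IsRoot, ← Polynomial.coeff_zero_eq_eval_zero, Polynomial.coeff_map,
          Polynomial.coeff_zero_eq_eval_zero, Polynomial.IsRoot.def.mp h2, map_zero]
      have h4 := hres₀ 0 h3
      rw [Valuation.map_zero] at h4
      exact zero_ne_one h4
    exact ⟨hinj, LinearMap.injective_iff_surjective.mp hinj⟩
  refine ⟨V₀, Vp, h₀, hp, hcompl, hres₀, hresp, hbij,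
    ⟨P₀, Pp, hfac, hroot₀, hrootp, rfl, rfl⟩, ?_⟩
  -- uniqueness
  intro V₀' Vp' h₀' hp' hcompl' hres₀' hresp'
  set Q₀ := LinearMap.charpoly (f.restrict h₀') with hQ₀def
  set Qp := LinearMap.charpoly (f.restrict hp') with hQpdef
  have hQ₀co : IsCoprime Pp Q₀ :=
    aux_isCoprime_of_no_common_root hPp0 hPpsplits
      (fun μ h1 h2 => hrootp μ h1 (hres₀' μ h2))
  have hQpco : IsCoprime P₀ Qp :=
    aux_isCoprime_of_no_common_root hP₀0 hP₀splits
      (fun μ h1 h2 => hresp' μ h2 (hroot₀ μ h1))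
  have hCH : Polynomial.aeval f (P₀ * Pp) = 0 := by
    rw [← hfac]; exact LinearMap.aeval_self_charpoly f
  -- V₀' ≤ V₀
  have hsub₀ : V₀' ≤ V₀ := by
    intro x hx
    have hQx : Polynomial.aeval f Q₀ x = 0 := by
      have h1 := aux_aeval_restrict_apply f h₀' Q₀ ⟨x, hx⟩
      rw [← h1, hQ₀def, LinearMap.aeval_self_charpoly]
      simp
    obtain ⟨a, b, hab⟩ := hQ₀co.symm
    have hxid : x = (Polynomial.aeval f (b * Pp)) x := by
      have h1 : Polynomial.aeval f (a * Q₀ + b * Pp) = 1 := by rw [hab]; exact map_one _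
      have h2 : (Polynomial.aeval f (a * Q₀)) x = 0 := by
        rw [map_mul]
        simp only [Module.End.mul_apply, hQx, map_zero]
      calc x = (Polynomial.aeval f (a * Q₀ + b * Pp)) x := by rw [h1]; rfl
        _ = (Polynomial.aeval f (a * Q₀)) x + (Polynomial.aeval f (b * Pp)) x := by
            rw [map_add]; rfl
        _ = (Polynomial.aeval f (b * Pp)) x := by rw [h2, zero_add]
    rw [hV₀def, LinearMap.mem_ker, hxid]
    have h1 : P₀ * (b * Pp) = b * (P₀ * Pp) := by ring
    calc (Polynomial.aeval f P₀) ((Polynomial.aeval f (b * Pp)) x)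
        = (Polynomial.aeval f (P₀ * (b * Pp))) x := by simp [map_mul, Module.End.mul_apply]
      _ = (Polynomial.aeval f b) ((Polynomial.aeval f (P₀ * Pp)) x) := by
          simp [h1, map_mul, Module.End.mul_apply]
      _ = 0 := by rw [hCH]; simp
  -- Vp' ≤ Vp
  have hsubp : Vp' ≤ Vp := by
    intro x hx
    have hQx : Polynomial.aeval f Qp x = 0 := by
      have h1 := aux_aeval_restrict_apply f hp' Qp ⟨x, hx⟩
      rw [← h1, hQpdef, LinearMap.aeval_self_charpoly]
      simp
    obtain ⟨a, b, hab⟩ := hQpco.symm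
    have hxid : x = (Polynomial.aeval f (b * P₀)) x := by
      have h1 : Polynomial.aeval f (a * Qp + b * P₀) = 1 := by rw [hab]; exact map_one _
      have h2 : (Polynomial.aeval f (a * Qp)) x = 0 := by
        rw [map_mul]
        simp only [Module.End.mul_apply, hQx, map_zero]
      calc x = (Polynomial.aeval f (a * Qp + b * P₀)) x := by rw [h1]; rfl
        _ = (Polynomial.aeval f (a * Qp)) x + (Polynomial.aeval f (b * P₀)) x := by
            rw [map_add]; rfl
        _ = (Polynomial.aeval f (b * P₀)) x := by rw [h2, zero_add]
    rw [hVpdef, LinearMap.mem_ker, hxid]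
    have h1 : Pp * (b * P₀) = b * (P₀ * Pp) := by ring
    calc (Polynomial.aeval f Pp) ((Polynomial.aeval f (b * P₀)) x)
        = (Polynomial.aeval f (Pp * (b * P₀))) x := by simp [map_mul, Module.End.mul_apply]
      _ = (Polynomial.aeval f b) ((Polynomial.aeval f (P₀ * Pp)) x) := by
          simp [h1, map_mul, Module.End.mul_apply]
      _ = 0 := by rw [hCH]; simp
  constructor
  · -- V₀' = V₀
    have h1 : V₀ = V₀ ⊓ (V₀' ⊔ Vp') := by rw [hcompl'.sup_eq_top, inf_top_eq]
    have h2 : V₀ ⊓ (V₀' ⊔ Vp') = V₀' ⊔ (Vp' ⊓ V₀) := by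
      rw [inf_comm]
      exact sup_inf_assoc_of_le Vp' hsub₀
    have h3 : Vp' ⊓ V₀ = ⊥ := by
      refine le_antisymm ?_ bot_le
      refine le_trans (inf_le_inf_right V₀ hsubp) ?_
      rw [inf_comm]
      exact hcompl.disjoint.le_bot
    rw [h1, h2, h3, sup_bot_eq]
  · -- Vp' = Vp
    have h1 : Vp = Vp ⊓ (Vp' ⊔ V₀') := by
      rw [sup_comm, hcompl'.sup_eq_top, inf_top_eq]
    have h2 : Vp ⊓ (Vp' ⊔ V₀') = Vp' ⊔ (V₀' ⊓ Vp) := by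
      rw [inf_comm]
      exact sup_inf_assoc_of_le V₀' hsubp
    have h3 : V₀' ⊓ Vp = ⊥ := by
      refine le_antisymm ?_ bot_le
      refine le_trans (inf_le_inf_right Vp hsub₀) ?_
      exact hcompl.disjoint.le_bot
    rw [h1, h2, h3, sup_bot_eq]
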